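/- For every real number γ > 0 and every ε with 0 < ε < γ, and for any finite set B of primes, there exists a squarefree positive integer n, composed only of primes outside B, such that γ − ε < log(n/φ(n)) < γ − ε/2. -/

import Mathlib

open Finset

private noncomputable def fF (p : ℕ) : ℝ := Real.log ((p : ℝ) / ((p : ℝ) - 1))

private lemma fF_bounds {p : ℕ} (hp : p.Prime) :
    1 / (p : ℝ) ≤ fF p ∧ fF p ≤ 1 / ((p : ℝ) - 1) := by
  have h2 : (2 : ℝ) ≤ p := by exact_mod_cast hp.two_le
  have h1 : (0 : ℝ) < (p : ℝ) - 1 := by linarith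
  have hp0 : (0 : ℝ) < p := by linarith
  have hx : (0 : ℝ) < (p : ℝ) / ((p : ℝ) - 1) := by positivity
  constructor
  · have := Real.one_sub_inv_le_log_of_pos hx
    have hinv : ((p : ℝ) / ((p : ℝ) - 1))⁻¹ = ((p : ℝ) - 1) / p := by
      rw [inv_div]
    rw [hinv] at this
    have : 1 - ((p : ℝ) - 1) / p = 1 / p := by field_simp; ring
    · rw [← this]
      have := Real.one_sub_inv_le_log_of_pos hx
      rw [hinv] at this
      exact this
  · have := Real.log_le_sub_one_of_pos hx
    have he : (p : ℝ) / ((p : ℝ) - 1) - 1 = 1 / ((p : ℝ) - 1) := by field_simp; ring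
    rw [he] at this
    exact this

private lemma key_prod (T : Finset ℕ) (hT : ∀ p ∈ T, p.Prime) :
    Squarefree (∏ p ∈ T, p) ∧
      ((∏ p ∈ T, p : ℕ) : ℝ) / (((∏ p ∈ T, p : ℕ).totient : ℕ) : ℝ)
        = ∏ p ∈ T, ((p : ℝ) / ((p : ℝ) - 1)) := by
  classical
  induction T using Finset.induction with
  | empty => simp
  | insert a s ha ih =>
    have hap : a.Prime := hT a (mem_insert_self a s)
    have hs : ∀ p ∈ s, p.Prime := fun p hp => hT p (mem_insert_of_mem hp)
    obtain ⟨ihsq, ihratio⟩ := ih hs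
    set m := ∏ p ∈ s, p with hm
    have hm0 : 0 < m := Finset.prod_pos fun p hp => (hs p hp).pos
    have hcop : Nat.Coprime a m := by
      refine Nat.Coprime.prod_right fun p hp => ?_
      exact (Nat.coprime_primes hap (hs p hp)).mpr (by rintro rfl; exact ha hp)
    have hsq : Squarefree (a * m) := (Nat.squarefree_mul hcop).mpr ⟨hap.prime.squarefree, ihsq⟩
    have htot : (a * m).totient = (a - 1) * m.totient := by
      rw [Nat.totient_mul hcop, Nat.totient_prime hap]
    have hprod : ∏ p ∈ insert a s, p = a * m := Finset.prod_insert ha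
    refine ⟨by rwa [hprod], ?_⟩
    rw [hprod, htot]
    have h2 : (2 : ℝ) ≤ (a : ℝ) := by exact_mod_cast hap.two_le
    have ha1 : ((a - 1 : ℕ) : ℝ) = (a : ℝ) - 1 := by
      have := hap.one_lt.le
      push_cast [Nat.cast_sub this]
      ring
    have hφ0 : (0 : ℝ) < (m.totient : ℝ) := by
      exact_mod_cast Nat.totient_pos.mpr hm0
    have ha10 : (0 : ℝ) < (a : ℝ) - 1 := by linarith
    rw [Finset.prod_insert ha, ← ihratio]
    push_cast [ha1]
    field_simp

theorem stmt_18 (γ ε : ℝ) (hγ : 0 < γ) (hε0 : 0 < ε) (hε1 : ε < γ)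
    (B : Finset ℕ) :
    ∃ n : ℕ, 0 < n ∧ Squarefree n ∧ (∀ p ∈ n.primeFactors, p ∉ B) ∧
      γ - ε < Real.log ((n : ℝ) / (Nat.totient n : ℝ)) ∧
      Real.log ((n : ℝ) / (Nat.totient n : ℝ)) < γ - ε / 2 := by
  classical
  set P₀ : ℕ := max (B.sup id) (⌈2 / ε⌉₊ + 1) with hP₀
  -- properties of primes above P₀
  have hnotB : ∀ p : ℕ, P₀ < p → p ∉ B := by
    intro p hp hpB
    have : p ≤ B.sup id := Finset.le_sup (f := id) hpB
    have : p ≤ P₀ := le_trans this (le_max_left _ _)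
    omega
  have hsmall : ∀ p : ℕ, p.Prime → P₀ < p → fF p < ε / 2 := by
    intro p hp hpgt
    have h1 : (⌈2 / ε⌉₊ + 1 : ℕ) ≤ P₀ := le_max_right _ _
    have h2 : (⌈2 / ε⌉₊ : ℕ) + 1 < p := lt_of_le_of_lt h1 hpgt
    have h3 : (2 : ℝ) / ε ≤ ⌈2 / ε⌉₊ := Nat.le_ceil _
    have h4 : ((⌈2 / ε⌉₊ : ℕ) : ℝ) + 1 < (p : ℝ) := by exact_mod_cast h2
    have h5 : 2 / ε < (p : ℝ) - 1 := by linarith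
    have h6 : (0 : ℝ) < (p : ℝ) - 1 := lt_trans (by positivity) h5
    have := (fF_bounds hp).2
    have h7 : 1 / ((p : ℝ) - 1) < ε / 2 := by
      rw [div_lt_div_iff₀ h6 (by norm_num : (0:ℝ) < 2)]
      rw [div_lt_iff₀ hε0] at h5
      linarith
    linarith
  have hposf : ∀ p : ℕ, p.Prime → 0 < fF p := by
    intro p hp
    have h1 := (fF_bounds hp).1
    have hp0 : (0:ℝ) < (p:ℝ) := by exact_mod_cast hp.pos
    have : (0:ℝ) < 1 / (p : ℝ) := by positivity
    linarith
  -- non-summability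
  set g : ℕ → ℝ := fun p => if p.Prime ∧ P₀ < p then fF p else 0 with hg
  have hgnonneg : ∀ p, 0 ≤ g p := by
    intro p
    simp only [hg]
    split
    · exact le_of_lt (hposf p (by tauto))
    · exact le_refl 0
  have hgns : ¬ Summable g := by
    intro hsum
    have hhsum : Summable (Set.indicator {p : ℕ | p.Prime ∧ P₀ < p} (fun n : ℕ => (1 : ℝ) / n)) := by
      refine hsum.of_nonneg_of_le (fun n => Set.indicator_nonneg (fun n _ => by positivity) n) ?_
      intro n
      simp only [Set.indicator_apply, Set.mem_setOf_eq, hg]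
      by_cases hn : n.Prime ∧ P₀ < n
      · simp only [if_pos hn]
        exact (fF_bounds hn.1).1
      · simp [hn]
    have h2sum : Summable (Set.indicator {p : ℕ | p.Prime ∧ ¬ P₀ < p} (fun n : ℕ => (1 : ℝ) / n)) := by
      apply summable_of_ne_finset_zero (s := Finset.range (P₀ + 1))
      intro n hn
      apply Set.indicator_of_notMem
      intro hmem
      obtain ⟨-, h2⟩ := hmem
      exact hn (Finset.mem_range.mpr (by omega))
    have := hhsum.add h2sum
    apply not_summable_one_div_on_primes
    convert this using 1
    funext n
    by_cases hn : n.Prime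
    · by_cases hn2 : P₀ < n
      · simp [Set.indicator, hn, hn2]
      · simp [Set.indicator, hn, hn2, Nat.not_lt.mp hn2]
    · simp [Set.indicator, hn]
  -- unbounded partial sums: exists a finset with big sum
  have hbig : ∃ s : Finset ℕ, γ - ε < ∑ p ∈ s, g p := by
    by_contra hcon
    push_neg at hcon
    exact hgns (summable_of_sum_le hgnonneg hcon)
  obtain ⟨s, hs⟩ := hbig
  have hfilter : ∑ p ∈ s, g p = ∑ p ∈ s.filter (fun p => p.Prime ∧ P₀ < p), fF p := by
    rw [Finset.sum_filter]
  -- minimal cardinality finset with sum > γ - ε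
  set Pk : ℕ → Prop := fun k => ∃ T : Finset ℕ,
      T.card = k ∧ (∀ p ∈ T, p.Prime ∧ P₀ < p) ∧ γ - ε < ∑ p ∈ T, fF p with hPk
  have hex : ∃ k, Pk k := by
    refine ⟨_, s.filter (fun p => p.Prime ∧ P₀ < p), rfl, ?_, ?_⟩
    · intro p hp
      exact (Finset.mem_filter.mp hp).2
    · rw [← hfilter]; exact hs
  obtain ⟨T, hTcard, hTmem, hTsum⟩ := Nat.find_spec hex
  have hTne : T.Nonempty := by
    rw [Finset.nonempty_iff_ne_empty]
    rintro rfl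
    simp only [Finset.sum_empty] at hTsum
    linarith
  obtain ⟨q, hq⟩ := hTne
  have hq' := hTmem q hq
  -- sum over T \ {q} is ≤ γ - ε by minimality
  have herase : ∑ p ∈ T.erase q, fF p ≤ γ - ε := by
    by_contra hcon
    push_neg at hcon
    have hlt : (T.erase q).card < Nat.find hex := by
      rw [← hTcard, Finset.card_erase_of_mem hq]
      exact Nat.sub_lt (Finset.card_pos.mpr ⟨q, hq⟩) one_pos
    exact Nat.find_min hex hlt
      ⟨T.erase q, rfl, fun p hp => hTmem p (Finset.mem_of_mem_erase hp), hcon⟩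
  have hsum_split : ∑ p ∈ T, fF p = fF q + ∑ p ∈ T.erase q, fF p :=
    (Finset.add_sum_erase T fF hq).symm
  have hupper : ∑ p ∈ T, fF p < γ - ε / 2 := by
    have := hsmall q hq'.1 hq'.2
    rw [hsum_split]
    linarith
  -- build n
  refine ⟨∏ p ∈ T, p, ?_, ?_, ?_, ?_, ?_⟩
  · exact Finset.prod_pos fun p hp => (hTmem p hp).1.pos
  · exact (key_prod T fun p hp => (hTmem p hp).1).1
  · intro p hp
    rw [Nat.primeFactors_prod (fun p hp => (hTmem p hp).1)] at hp
    exact hnotB p (hTmem p hp).2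
  all_goals {
    have hratio := (key_prod T fun p hp => (hTmem p hp).1).2
    have hlog : Real.log (((∏ p ∈ T, p : ℕ) : ℝ) / (((∏ p ∈ T, p : ℕ).totient : ℕ) : ℝ))
        = ∑ p ∈ T, fF p := by
      rw [hratio, Real.log_prod]
      · rfl
      · intro p hp
        have h2 : (2 : ℝ) ≤ (p : ℝ) := by exact_mod_cast (hTmem p hp).1.two_le
        have : (0:ℝ) < (p:ℝ) / ((p:ℝ) - 1) := by
          apply div_pos <;> linarith
        exact ne_of_gt this
    rw [hlog]
    first | exact hTsum | exact hupper
  }
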